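/- Let θ, q ∈ ℚ_3 with 0 < |θ−1|_3 < |q|_3 < 1 and |q|_3 = 1/3. Then the cubic y³ − (1+θ+θ²)y² − (2θ+1)(1−θ−q)y − (1−θ−q)² = 0 has no root in ℚ_3. -/

import Mathlib

/-- In `ℚ_3`, if `0 < ‖θ-1‖ < ‖q‖ < 1` and `‖q‖ = 1/3`, then the fixed-point
cubic has no root in `ℚ_3`. -/
theorem cubic_no_root_in_Q3 (θ q : ℚ_[3])
    (h1 : 0 < ‖θ - 1‖) (h2 : ‖θ - 1‖ < ‖q‖) (h3 : ‖q‖ < 1) (hq : ‖q‖ = 1 / 3) :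
    ∀ y : ℚ_[3],
      y ^ 3 - (1 + θ + θ ^ 2) * y ^ 2 - (2 * θ + 1) * (1 - θ - q) * y
        - (1 - θ - q) ^ 2 ≠ 0 := by
  intro y hy
  have hp3 : ‖(3 : ℚ_[3])‖ = 1/3 := by
    have := @Padic.norm_p 3 ⟨by norm_num⟩
    push_cast at this ⊢
    rw [this]; norm_num
  -- ‖θ - 1‖ ≤ 1/9
  have hε : ‖θ - 1‖ ≤ 1/9 := by
    have h := (Padic.norm_le_pow_iff_norm_lt_pow_add_one (θ - 1) (-2)).mpr ?_
    · calc ‖θ - 1‖ ≤ ((3:ℕ):ℝ) ^ (-2:ℤ) := h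
        _ = 1/9 := by norm_num
    · rw [hq] at h2
      calc ‖θ - 1‖ < 1/3 := h2
        _ = ((3:ℕ):ℝ) ^ (-2 + 1 : ℤ) := by norm_num
  -- ‖1 - θ - q‖ = 1/3
  have hs : ‖1 - θ - q‖ = 1/3 := by
    have heq : (1 : ℚ_[3]) - θ - q = (-(θ-1)) + (-q) := by ring
    rw [heq, Padic.add_eq_max_of_ne, norm_neg, norm_neg, hq]
    · rw [max_eq_right]; linarith
    · rw [norm_neg, norm_neg, hq]; intro h; linarith
  -- ‖θ + 2‖ ≤ 1
  have ht2 : ‖θ + 2‖ ≤ 1 := by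
    have heq : θ + 2 = (θ - 1) + 3 := by ring
    rw [heq]
    refine le_trans (Padic.nonarchimedean _ _) ?_
    rw [hp3]
    apply max_le <;> linarith
  -- ‖1 + θ + θ^2‖ ≤ 1/3
  have ha : ‖1 + θ + θ^2‖ ≤ 1/3 := by
    have heq : 1 + θ + θ^2 = (3 : ℚ_[3]) + (θ - 1) * (θ + 2) := by ring
    rw [heq]
    refine le_trans (Padic.nonarchimedean _ _) ?_
    rw [hp3, norm_mul]
    apply max_le
    · linarith
    · nlinarith [norm_nonneg (θ - 1), norm_nonneg (θ + 2)]
  -- ‖2θ + 1‖ ≤ 1/3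
  have hb : ‖2*θ + 1‖ ≤ 1/3 := by
    have heq : 2*θ + 1 = (3 : ℚ_[3]) + 2 * (θ - 1) := by ring
    rw [heq]
    refine le_trans (Padic.nonarchimedean _ _) ?_
    rw [hp3, norm_mul]
    have h2n : ‖(2 : ℚ_[3])‖ ≤ 1 := by
      have := @Padic.norm_int_le_one 3 ⟨by norm_num⟩ 2
      push_cast at this; exact this
    apply max_le
    · linarith
    · nlinarith [norm_nonneg (θ - 1), norm_nonneg (2 : ℚ_[3])]
  set t := ‖y‖ with htdef
  have ht0 : 0 ≤ t := norm_nonneg y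
  rcases le_or_gt 1 t with hcase | hcase
  · -- ‖y‖ ≥ 1 : y^3 dominates
    have heq : y^3 = (1 + θ + θ^2) * y^2 + ((2*θ+1) * (1 - θ - q) * y + (1 - θ - q)^2) := by
      linear_combination hy
    have hn : ‖y^3‖ ≤ max ‖(1 + θ + θ^2) * y^2‖ ‖(2*θ+1) * (1 - θ - q) * y + (1 - θ - q)^2‖ := by
      rw [heq]; exact Padic.nonarchimedean _ _
    have hn2 := Padic.nonarchimedean ((2*θ+1) * (1 - θ - q) * y) ((1 - θ - q)^2)
    rw [norm_pow] at hn
    rw [norm_mul, norm_pow] at hn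
    rw [norm_mul, norm_mul, norm_pow, hs] at hn2
    have hA : ‖1 + θ + θ^2‖ * t^2 < t^3 := by nlinarith [norm_nonneg (1 + θ + θ^2)]
    have hB : ‖2*θ+1‖ * (1/3) * t < t^3 := by nlinarith [norm_nonneg (2*θ+1)]
    have hC : (1/3:ℝ)^2 < t^3 := by nlinarith
    have hfin := lt_of_le_of_lt hn (max_lt hA (lt_of_le_of_lt hn2 (max_lt hB hC)))
    rw [← htdef] at hfin
    exact lt_irrefl _ hfin
  · -- ‖y‖ < 1 hence ≤ 1/3 : constant term dominates
    have htle : t ≤ 1/3 := by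
      have h := (Padic.norm_le_pow_iff_norm_lt_pow_add_one y (-1)).mpr ?_
      · calc t ≤ ((3:ℕ):ℝ) ^ (-1:ℤ) := h
          _ = 1/3 := by norm_num
      · calc t < 1 := hcase
          _ = ((3:ℕ):ℝ) ^ (-1 + 1 : ℤ) := by norm_num
    have heq : (1 - θ - q)^2 = y^3 + (-((1 + θ + θ^2) * y^2) + -((2*θ+1) * (1 - θ - q) * y)) := by
      linear_combination -hy
    have hn : ‖(1 - θ - q)^2‖ ≤ max ‖y^3‖ ‖-((1 + θ + θ^2) * y^2) + -((2*θ+1) * (1 - θ - q) * y)‖ := by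
      rw [heq]; exact Padic.nonarchimedean _ _
    have hn2 := Padic.nonarchimedean (-((1 + θ + θ^2) * y^2)) (-((2*θ+1) * (1 - θ - q) * y))
    rw [norm_neg, norm_neg, norm_mul, norm_mul, norm_mul, norm_pow, hs] at hn2
    rw [norm_pow, norm_pow, hs] at hn
    have hA : t^3 < (1/3:ℝ)^2 := by nlinarith
    have hB : ‖1 + θ + θ^2‖ * t^2 < (1/3:ℝ)^2 := by nlinarith [norm_nonneg (1 + θ + θ^2)]
    have hC : ‖2*θ+1‖ * (1/3) * t < (1/3:ℝ)^2 := by nlinarith [norm_nonneg (2*θ+1)]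
    have hfin := lt_of_le_of_lt hn (max_lt (by rw [← htdef]; exact hA) (lt_of_le_of_lt hn2 (max_lt (by rw [← htdef]; exact hB) (by rw [← htdef]; exact hC))))
    exact lt_irrefl _ hfin
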